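/- Let κ₁, κ₂ ∈ ℝ and let q ∈ ℍ_{κ₁,κ₂} be a unit quaternion (N(q) = 1). Then (j·q)·star(k·q) = −κ₁·i. (This computes the curvature of the principal connection on the Clifford fibration: the pairing of the horizontal frame vectors jq and kq equals −κ₁ i, so the curvature of the base spacetime is κ₁.) -/
import Mathlib


open Quaternion

/-- The norm-squared on the generalized quaternions `ℍ_{κ₁,κ₂}`:
`N(x + yi + uj + vk) = x² + κ₂y² + κ₁u² + κ₁κ₂v²`. -/
def qN (κ₁ κ₂ : ℝ) (q : ℍ[ℝ, -κ₂, -κ₁]) : ℝ :=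
  q.re ^ 2 + κ₂ * q.imI ^ 2 + κ₁ * q.imJ ^ 2 + κ₁ * κ₂ * q.imK ^ 2

/-- For a unit quaternion `q`, the Hermitian pairing of the horizontal frame vectors
`jq` and `kq` is `(jq)(k̄q̄) = -κ₁ i`; the curvature of the base spacetime is `κ₁`. -/
theorem clifford_fibration_curvature (κ₁ κ₂ : ℝ) (q : ℍ[ℝ, -κ₂, -κ₁])
    (hq : qN κ₁ κ₂ q = 1) :
    let i : ℍ[ℝ, -κ₂, -κ₁] := ⟨0, 1, 0, 0⟩
    let j : ℍ[ℝ, -κ₂, -κ₁] := ⟨0, 0, 1, 0⟩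
    let k : ℍ[ℝ, -κ₂, -κ₁] := ⟨0, 0, 0, 1⟩
    (j * q) * star (k * q) = -κ₁ • i := by
  intro i j k
  unfold qN at hq
  have h : (⟨0, 0, 1, 0⟩ * q : ℍ[ℝ, -κ₂, -κ₁]) * star (⟨0, 0, 0, 1⟩ * q) = -κ₁ • (⟨0, 1, 0, 0⟩ : ℍ[ℝ, -κ₂, -κ₁]) := by
    ext
    · simp; ring
    · simp; linear_combination -κ₁ * hq
    · simp; ring
    · simp; ring
  exact h
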